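/- Uniform moment bounds (Lemma 5.1): Under the moment-recursion hypotheses on (X_t)_{t∈[0,T]} and ν_2, …, ν_k stated in the context, for every n ∈ ℕ and every t ∈ [0,T]: 𝔼[|X_t|^n] ≤ ((3 + (−1)^{n+1})/2) · n! · C^n; that is, 𝔼[|X_t|^n] ≤ n!·C^n when n is even and 𝔼[|X_t|^n] ≤ 2·n!·C^n when n is odd, where C := max(4, max_{2 ≤ j ≤ k} ‖ν_j‖). -/

import Mathlib

open MeasureTheory Finset

/-- uniform moment bounds (Lemma 5.1).  The finite signed Borel
measures `ν_j` (`2 ≤ j ≤ k`) are represented by their Jordan decomposition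
`ν_j = νp j − νm j` into mutually singular finite measures, so that
`‖ν_j‖ = νp j ([0,T]) + νm j ([0,T])`.  Under the moment recursion
`𝔼[X_t^n] = ∑_{j=2}^{min(n,k)} (n!/(n−j)!) ∫_{(0,t]} 𝔼[X_s^{n−j}] dν_j(s)`,
one has `𝔼[|X_t|^n] ≤ ((3+(−1)^{n+1})/2)·n!·C^n` with
`C := max(4, max_{2≤j≤k} ‖ν_j‖)`. -/
theorem uniform_moment_bounds
    {Ω : Type*} [MeasurableSpace Ω] (ℙ : Measure Ω) [IsProbabilityMeasure ℙ]
    (T : ℝ) (hT : 0 < T) (k : ℕ) (hk2 : 2 ≤ k)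
    (X : ℝ → Ω → ℝ)
    (hint : ∀ t ∈ Set.Icc (0 : ℝ) T, ∀ n : ℕ, Integrable (fun ω => |X t ω| ^ n) ℙ)
    (hmeas : ∀ n : ℕ, Measurable fun t : ℝ => ∫ ω, X t ω ^ n ∂ℙ)
    (νp νm : ℕ → Measure ℝ)
    (hfinp : ∀ j, IsFiniteMeasure (νp j)) (hfinm : ∀ j, IsFiniteMeasure (νm j))
    (hsing : ∀ j, (νp j).MutuallySingular (νm j))
    (hrec : ∀ n : ℕ, 1 ≤ n → ∀ t ∈ Set.Icc (0 : ℝ) T,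
      (∫ ω, X t ω ^ n ∂ℙ)
        = ∑ j ∈ Finset.Icc 2 (min n k), (Nat.descFactorial n j : ℝ) *
            ((∫ s in Set.Ioc (0 : ℝ) t, (∫ ω, X s ω ^ (n - j) ∂ℙ) ∂(νp j))
              - ∫ s in Set.Ioc (0 : ℝ) t, (∫ ω, X s ω ^ (n - j) ∂ℙ) ∂(νm j)))
    (C : ℝ)
    (hC : C = max 4 ((Finset.Icc 2 k).sup' (Finset.nonempty_Icc.mpr hk2)
      fun j => ((νp j) (Set.Icc 0 T) + (νm j) (Set.Icc 0 T)).toReal)) :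
    ∀ n : ℕ, ∀ t ∈ Set.Icc (0 : ℝ) T,
      (∫ ω, |X t ω| ^ n ∂ℙ)
        ≤ ((3 + (-1 : ℝ) ^ (n + 1)) / 2) * (Nat.factorial n : ℝ) * C ^ n := by
  have hC4 : (4 : ℝ) ≤ C := hC ▸ le_max_left _ _
  have hC0 : (0 : ℝ) < C := lt_of_lt_of_le (by norm_num) hC4
  have hνC : ∀ j ∈ Finset.Icc 2 k,
      ((νp j) (Set.Icc 0 T) + (νm j) (Set.Icc 0 T)).toReal ≤ C := by
    intro j hj
    rw [hC]
    exact le_max_of_le_right (Finset.le_sup' (fun j => ((νp j) (Set.Icc 0 T) + (νm j) (Set.Icc 0 T)).toReal) hj)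
  -- |∫ X^m| ≤ ∫ |X|^m
  have habs : ∀ (s : ℝ) (m : ℕ), |∫ ω, X s ω ^ m ∂ℙ| ≤ ∫ ω, |X s ω| ^ m ∂ℙ := by
    intro s m
    calc |∫ ω, X s ω ^ m ∂ℙ| ≤ ∫ ω, ‖X s ω ^ m‖ ∂ℙ := by
          rw [← Real.norm_eq_abs]; exact norm_integral_le_integral_norm _
      _ = ∫ ω, |X s ω| ^ m ∂ℙ := by simp [Real.norm_eq_abs, abs_pow]
  -- odd step: bound at 2l+1 from bounds at 2l and 2l+2
  have odd_step : ∀ l : ℕ,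
      (∀ s ∈ Set.Icc (0 : ℝ) T,
        (∫ ω, |X s ω| ^ (2 * l) ∂ℙ) ≤ ((2 * l).factorial : ℝ) * C ^ (2 * l)) →
      (∀ s ∈ Set.Icc (0 : ℝ) T,
        (∫ ω, |X s ω| ^ (2 * l + 2) ∂ℙ) ≤ ((2 * l + 2).factorial : ℝ) * C ^ (2 * l + 2)) →
      ∀ s ∈ Set.Icc (0 : ℝ) T,
        (∫ ω, |X s ω| ^ (2 * l + 1) ∂ℙ) ≤ 2 * ((2 * l + 1).factorial : ℝ) * C ^ (2 * l + 1) := by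
    intro l hA hB s hs
    set L : ℝ := (l : ℝ) with hLdef
    have hL0 : (0 : ℝ) ≤ L := Nat.cast_nonneg l
    set r : ℝ := C * (2 * L + 1) with hrdef
    have hr : (0 : ℝ) < r := by positivity
    have hpt : ∀ ω, 2 * r * |X s ω| ^ (2 * l + 1)
        ≤ r ^ 2 * |X s ω| ^ (2 * l) + |X s ω| ^ (2 * l + 2) := by
      intro ω
      set a := |X s ω| with ha
      have ha0 : (0 : ℝ) ≤ a := abs_nonneg _
      have e0 : a ^ (2 * l) = (a ^ l) ^ 2 := by rw [← pow_mul, mul_comm]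
      have e1 : a ^ (2 * l + 1) = (a ^ l) ^ 2 * a := by rw [pow_succ, e0]
      have e2 : a ^ (2 * l + 2) = (a ^ l) ^ 2 * a ^ 2 := by rw [pow_add, e0]
      rw [e0, e1, e2]
      nlinarith [sq_nonneg (r * a ^ l - a ^ l * a), sq_nonneg (a ^ l)]
    have hI0 : Integrable (fun ω => |X s ω| ^ (2 * l)) ℙ := hint s hs _
    have hI1 : Integrable (fun ω => 2 * r * |X s ω| ^ (2 * l + 1)) ℙ :=
      (hint s hs _).const_mul _
    have hI2 : Integrable (fun ω => r ^ 2 * |X s ω| ^ (2 * l) + |X s ω| ^ (2 * l + 2)) ℙ :=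
      (hI0.const_mul _).add (hint s hs _)
    have hmono := integral_mono hI1 hI2 hpt
    rw [integral_const_mul, integral_add (hI0.const_mul _) (hint s hs _),
      integral_const_mul] at hmono
    have hA' := hA s hs
    have hB' := hB s hs
    set I : ℝ := ∫ ω, |X s ω| ^ (2 * l + 1) ∂ℙ with hIdef
    set F : ℝ := ((2 * l).factorial : ℝ) with hFdef
    have hF0 : (0 : ℝ) ≤ F := Nat.cast_nonneg _
    set P : ℝ := C ^ (2 * l) with hPdef
    have hP0 : (0 : ℝ) ≤ P := le_of_lt (pow_pos hC0 _)
    have eF1 : ((2 * l + 1).factorial : ℝ) = (2 * L + 1) * F := by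
      rw [hFdef, hLdef, Nat.factorial_succ]
      push_cast; ring
    have eF2 : ((2 * l + 2).factorial : ℝ) = (2 * L + 2) * ((2 * L + 1) * F) := by
      rw [hFdef, hLdef, show 2 * l + 2 = (2 * l + 1) + 1 by ring, Nat.factorial_succ,
        Nat.factorial_succ]
      push_cast; ring
    have eP1 : C ^ (2 * l + 1) = P * C := by rw [hPdef, pow_succ]
    have eP2 : C ^ (2 * l + 2) = P * C ^ 2 := by rw [hPdef, pow_add]
    rw [eF2, eP2] at hB'
    rw [eF1, eP1]
    -- cancel the positive factor 2*r
    refine le_of_mul_le_mul_left ?_ (show (0 : ℝ) < 2 * r by positivity)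
    have hscal : ((2 * L + 1)) ^ 2 + (2 * L + 2) * (2 * L + 1) ≤ 4 * (2 * L + 1) ^ 2 := by
      nlinarith [hL0]
    have hCPF : (0 : ℝ) ≤ C ^ 2 * (F * P) := by positivity
    have hmul := mul_le_mul_of_nonneg_left hscal hCPF
    calc 2 * r * I ≤ r ^ 2 * (∫ ω, |X s ω| ^ (2 * l) ∂ℙ) + ∫ ω, |X s ω| ^ (2 * l + 2) ∂ℙ :=
          hmono
      _ ≤ r ^ 2 * (F * P) + (2 * L + 2) * ((2 * L + 1) * F) * (P * C ^ 2) := by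
          have h1 : r ^ 2 * (∫ ω, |X s ω| ^ (2 * l) ∂ℙ) ≤ r ^ 2 * (F * P) := by
            apply mul_le_mul_of_nonneg_left _ (sq_nonneg r)
            exact hA'
          linarith [hB']
      _ ≤ 2 * r * (2 * ((2 * L + 1) * F) * (P * C)) := by
          rw [hrdef]; nlinarith [hmul]
  -- even bounds, by strong induction
  have even_key : ∀ n : ℕ, Even n → ∀ t ∈ Set.Icc (0 : ℝ) T,
      (∫ ω, |X t ω| ^ n ∂ℙ) ≤ (n.factorial : ℝ) * C ^ n := by
    intro n
    induction n using Nat.strong_induction_on with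
    | _ n IH =>
      intro hn t ht
      rcases Nat.eq_zero_or_pos n with h0 | hpos
      · subst h0
        simp
      have hn2 : 2 ≤ n := by
        obtain ⟨w, hw⟩ := hn; omega
      -- bound for all exponents m ≤ n - 2, any parity
      have hb : ∀ m : ℕ, m + 2 ≤ n → ∀ s ∈ Set.Icc (0 : ℝ) T,
          (∫ ω, |X s ω| ^ m ∂ℙ) ≤ 2 * (m.factorial : ℝ) * C ^ m := by
        intro m hm s hs
        rcases Nat.even_or_odd m with he | ho
        · have h1 := IH m (by omega) he s hs
          have h2 : (0 : ℝ) ≤ (m.factorial : ℝ) * C ^ m := by positivity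
          linarith
        · obtain ⟨l, hl⟩ := ho
          subst hl
          exact odd_step l
            (fun s hs => IH (2 * l) (by omega) ⟨l, by ring⟩ s hs)
            (fun s hs => IH (2 * l + 2) (by omega) ⟨l + 1, by ring⟩ s hs) s hs
      -- per-term bound in the recursion
      have hterm : ∀ j ∈ Finset.Icc 2 (min n k),
          |(Nat.descFactorial n j : ℝ) *
            ((∫ s in Set.Ioc (0 : ℝ) t, (∫ ω, X s ω ^ (n - j) ∂ℙ) ∂(νp j))
              - ∫ s in Set.Ioc (0 : ℝ) t, (∫ ω, X s ω ^ (n - j) ∂ℙ) ∂(νm j))|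
          ≤ 2 * (n.factorial : ℝ) * C * C ^ (n - j) := by
        intro j hj
        rw [Finset.mem_Icc] at hj
        obtain ⟨hj2, hjnk⟩ := hj
        have hjn : j ≤ n := le_trans hjnk (min_le_left _ _)
        have hjk : j ≤ k := le_trans hjnk (min_le_right _ _)
        set m := n - j with hm
        set B : ℝ := 2 * (m.factorial : ℝ) * C ^ m with hBdef
        have hB0 : (0 : ℝ) ≤ B := by positivity
        have hIoc : Set.Ioc (0 : ℝ) t ⊆ Set.Icc 0 T :=
          fun s hsm => ⟨le_of_lt hsm.1, le_trans hsm.2 ht.2⟩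
        have hbound : ∀ s ∈ Set.Ioc (0 : ℝ) t, ‖∫ ω, X s ω ^ m ∂ℙ‖ ≤ B := by
          intro s hsm
          rw [Real.norm_eq_abs]
          exact le_trans (habs s m) (hb m (by omega) s (hIoc hsm))
        have key : ∀ μ : ℕ → Measure ℝ, (∀ i, IsFiniteMeasure (μ i)) →
            |∫ s in Set.Ioc (0 : ℝ) t, (∫ ω, X s ω ^ m ∂ℙ) ∂(μ j)|
              ≤ B * ((μ j) (Set.Icc 0 T)).toReal := by
          intro μ hμ
          have := hμ j
          calc |∫ s in Set.Ioc (0 : ℝ) t, (∫ ω, X s ω ^ m ∂ℙ) ∂(μ j)|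
              ≤ B * ((μ j) (Set.Ioc 0 t)).toReal :=
                norm_setIntegral_le_of_norm_le_const (measure_lt_top _ _) hbound
            _ ≤ B * ((μ j) (Set.Icc 0 T)).toReal :=
                mul_le_mul_of_nonneg_left
                  (ENNReal.toReal_mono (measure_ne_top _ _) (measure_mono hIoc)) hB0
        have hIp := key νp hfinp
        have hIm := key νm hfinm
        have hsum : ((νp j) (Set.Icc 0 T)).toReal + ((νm j) (Set.Icc 0 T)).toReal ≤ C := by
          have := hfinp j; have := hfinm j
          rw [← ENNReal.toReal_add (measure_ne_top _ _) (measure_ne_top _ _)]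
          exact hνC j (Finset.mem_Icc.mpr ⟨hj2, hjk⟩)
        have hdF : (Nat.descFactorial n j : ℝ) * (m.factorial : ℝ) = (n.factorial : ℝ) := by
          have h := Nat.factorial_mul_descFactorial hjn
          have h' : (((n - j).factorial * n.descFactorial j : ℕ) : ℝ) = (n.factorial : ℝ) := by
            exact_mod_cast congrArg (Nat.cast : ℕ → ℝ) h
          push_cast at h'
          rw [hm]; linarith [h']
        have hd0 : (0 : ℝ) ≤ (Nat.descFactorial n j : ℝ) := Nat.cast_nonneg _
        calc |(Nat.descFactorial n j : ℝ) *
              ((∫ s in Set.Ioc (0 : ℝ) t, (∫ ω, X s ω ^ m ∂ℙ) ∂(νp j))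
                - ∫ s in Set.Ioc (0 : ℝ) t, (∫ ω, X s ω ^ m ∂ℙ) ∂(νm j))|
            = (Nat.descFactorial n j : ℝ) *
              |(∫ s in Set.Ioc (0 : ℝ) t, (∫ ω, X s ω ^ m ∂ℙ) ∂(νp j))
                - ∫ s in Set.Ioc (0 : ℝ) t, (∫ ω, X s ω ^ m ∂ℙ) ∂(νm j)| := by
              rw [abs_mul, Nat.abs_cast]
          _ ≤ (Nat.descFactorial n j : ℝ) *
              (|∫ s in Set.Ioc (0 : ℝ) t, (∫ ω, X s ω ^ m ∂ℙ) ∂(νp j)|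
                + |∫ s in Set.Ioc (0 : ℝ) t, (∫ ω, X s ω ^ m ∂ℙ) ∂(νm j)|) :=
              mul_le_mul_of_nonneg_left (abs_sub _ _) hd0
          _ ≤ (Nat.descFactorial n j : ℝ) *
              (B * (((νp j) (Set.Icc 0 T)).toReal + ((νm j) (Set.Icc 0 T)).toReal)) := by
              apply mul_le_mul_of_nonneg_left _ hd0
              calc _ ≤ B * ((νp j) (Set.Icc 0 T)).toReal + B * ((νm j) (Set.Icc 0 T)).toReal :=
                    add_le_add hIp hIm
                _ = _ := by ring
          _ ≤ (Nat.descFactorial n j : ℝ) * (B * C) := by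
              apply mul_le_mul_of_nonneg_left _ hd0
              exact mul_le_mul_of_nonneg_left hsum hB0
          _ = 2 * (n.factorial : ℝ) * C * C ^ m := by
              rw [hBdef]; rw [← hdF]; ring
      -- geometric sum bound
      have hgeom : ∑ j ∈ Finset.Icc 2 (min n k), C ^ (n - j) ≤ C ^ (n - 1) / 3 := by
        have hinj : ∀ x ∈ Finset.Icc 2 (min n k), ∀ y ∈ Finset.Icc 2 (min n k),
            n - x = n - y → x = y := by
          intro x hx y hy hxy
          rw [Finset.mem_Icc] at hx hy
          omega
        have himg : (Finset.Icc 2 (min n k)).image (fun j => n - j) ⊆ Finset.range (n - 1) := by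
          intro i hi
          rw [Finset.mem_image] at hi
          obtain ⟨j, hj, rfl⟩ := hi
          rw [Finset.mem_Icc] at hj
          rw [Finset.mem_range]
          omega
        calc ∑ j ∈ Finset.Icc 2 (min n k), C ^ (n - j)
            = ∑ i ∈ (Finset.Icc 2 (min n k)).image (fun j => n - j), C ^ i :=
              (Finset.sum_image hinj).symm
          _ ≤ ∑ i ∈ Finset.range (n - 1), C ^ i :=
              Finset.sum_le_sum_of_subset_of_nonneg himg
                (fun i _ _ => le_of_lt (pow_pos hC0 i))
          _ = (C ^ (n - 1) - 1) / (C - 1) := geom_sum_eq (by linarith) _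
          _ ≤ C ^ (n - 1) / 3 := by
              rw [div_le_div_iff₀ (by linarith) (by norm_num)]
              have hpow : (1 : ℝ) ≤ C ^ (n - 1) := one_le_pow₀ (by linarith)
              nlinarith [hpow]
      -- put things together
      have habs_eq : (∫ ω, |X t ω| ^ n ∂ℙ) = ∫ ω, X t ω ^ n ∂ℙ := by
        congr 1; funext ω; exact hn.pow_abs _
      have hpown : C ^ n = C ^ (n - 1) * C := by
        rw [← pow_succ]
        congr 1
        omega
      have hfac0 : (0 : ℝ) ≤ (n.factorial : ℝ) := Nat.cast_nonneg _
      have hpow0 : (0 : ℝ) ≤ C ^ (n - 1) := le_of_lt (pow_pos hC0 _)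
      calc (∫ ω, |X t ω| ^ n ∂ℙ) = ∫ ω, X t ω ^ n ∂ℙ := habs_eq
        _ ≤ |∫ ω, X t ω ^ n ∂ℙ| := le_abs_self _
        _ = |∑ j ∈ Finset.Icc 2 (min n k), (Nat.descFactorial n j : ℝ) *
              ((∫ s in Set.Ioc (0 : ℝ) t, (∫ ω, X s ω ^ (n - j) ∂ℙ) ∂(νp j))
                - ∫ s in Set.Ioc (0 : ℝ) t, (∫ ω, X s ω ^ (n - j) ∂ℙ) ∂(νm j))| := by
            rw [hrec n (by omega) t ht]
        _ ≤ ∑ j ∈ Finset.Icc 2 (min n k), |(Nat.descFactorial n j : ℝ) *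
              ((∫ s in Set.Ioc (0 : ℝ) t, (∫ ω, X s ω ^ (n - j) ∂ℙ) ∂(νp j))
                - ∫ s in Set.Ioc (0 : ℝ) t, (∫ ω, X s ω ^ (n - j) ∂ℙ) ∂(νm j))| :=
            Finset.abs_sum_le_sum_abs _ _
        _ ≤ ∑ j ∈ Finset.Icc 2 (min n k), 2 * (n.factorial : ℝ) * C * C ^ (n - j) :=
            Finset.sum_le_sum hterm
        _ = 2 * (n.factorial : ℝ) * C * ∑ j ∈ Finset.Icc 2 (min n k), C ^ (n - j) := by
            rw [Finset.mul_sum]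
        _ ≤ 2 * (n.factorial : ℝ) * C * (C ^ (n - 1) / 3) := by
            apply mul_le_mul_of_nonneg_left hgeom (by positivity)
        _ ≤ (n.factorial : ℝ) * C ^ n := by
            rw [hpown]
            nlinarith [mul_nonneg hfac0 hpow0, hC4, hC0.le]
  -- conclusion
  intro n t ht
  rcases Nat.even_or_odd n with hn | hn
  · rw [Odd.neg_one_pow (Even.add_one hn)]
    norm_num
    exact even_key n hn t ht
  · rw [Even.neg_one_pow (Odd.add_one hn)]
    norm_num
    obtain ⟨l, hl⟩ := hn
    subst hl
    have := odd_step l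
      (fun s hs => even_key (2 * l) ⟨l, by ring⟩ s hs)
      (fun s hs => even_key (2 * l + 2) ⟨l + 1, by ring⟩ s hs) t ht
    linarith
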